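/- arXiv:1304.4904 — 5 statements merged into one kernel-verified Lean document; each statement's English description precedes it below -/
import Mathlib

section
/- The maximum of S = (8/N)·Σ_{k=0}^{N} k·p_k·3^k·binomial(N,k) − 4, over all choices of real numbers p_k with 0 ≤ p_k ≤ Q for all k and Σ_{k=0}^{N} p_k·3^k·binomial(N,k) = 1 (where Q ≥ 4^{−N} so the feasible set is nonempty), is attained by the 'greedy' assignment: p_k = Q for all k > l'−1, p_k = 0 for all k < l'−1, and p_{l'−1} chosen to satisfy the normalization, where l' is the smallest index such that Q·Σ_{k=l'}^{N} 3^k·binomial(N,k) ≤ 1. -/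
open Finset

/-- The weighted objective of the N-run CHSH linear program. -/
noncomputable def chshObj (N : ℕ) (p : ℕ → ℝ) : ℝ :=
  (8 / N) * ∑ k ∈ Finset.range (N + 1),
    (k : ℝ) * p k * 3 ^ k * (N.choose k : ℝ) - 4

/-- The tail weight `Σ_{k=l}^{N} 3^k C(N,k)`. -/
def chshTail (N l : ℕ) : ℕ := ∑ k ∈ Finset.Icc l N, 3 ^ k * N.choose k

/-- The greedy assignment: `Q` above the cutoff `l'`, the normalisation
remainder at `l' - 1`, and `0` below. -/
noncomputable def chshGreedy (N l' : ℕ) (Q : ℝ) : ℕ → ℝ := fun k =>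
  if l' ≤ k then Q
  else if k + 1 = l' then
    (1 - Q * (chshTail N l' : ℝ)) / ((3 : ℝ) ^ k * (N.choose k : ℝ))
  else 0

lemma chshTail_succ (N m : ℕ) (h : m ≤ N) :
    chshTail N m = 3 ^ m * N.choose m + chshTail N (m + 1) := by
  unfold chshTail
  rw [Finset.Icc_add_one_left_eq_Ioc, ← Finset.Ioc_insert_left h, Finset.sum_insert (by simp)]

lemma chshTail_zero (N : ℕ) : chshTail N 0 = 4 ^ N := by
  have h := add_pow 3 1 N (R := ℕ)
  simp only [one_pow, mul_one] at h
  unfold chshTail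
  rw [show (4:ℕ) = 3 + 1 by norm_num, h, ← Finset.Ico_add_one_right_eq_Icc, ← Finset.range_eq_Ico]
  rfl

theorem greedy_optimal_for_CHSH_LP (N : ℕ) (hN : 0 < N) (Q : ℝ)
    (hQ : ((4 : ℝ) ^ N)⁻¹ ≤ Q)
    (l' : ℕ) (hl'N : l' ≤ N + 1)
    (hl'1 : Q * (chshTail N l' : ℝ) ≤ 1)
    (hl'2 : ∀ m < l', ¬ (Q * (chshTail N m : ℝ) ≤ 1)) :
    ((∀ k, 0 ≤ chshGreedy N l' Q k ∧ chshGreedy N l' Q k ≤ Q) ∧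
      ∑ k ∈ Finset.range (N + 1),
        chshGreedy N l' Q k * 3 ^ k * (N.choose k : ℝ) = 1) ∧
    ∀ p : ℕ → ℝ,
      (∀ k, 0 ≤ p k ∧ p k ≤ Q) →
      (∑ k ∈ Finset.range (N + 1), p k * 3 ^ k * (N.choose k : ℝ) = 1) →
      chshObj N p ≤ chshObj N (chshGreedy N l' Q) := by
  have hQ0 : (0 : ℝ) < Q := lt_of_lt_of_le (by positivity) hQ
  set g := chshGreedy N l' Q with hg
  set w : ℕ → ℝ := fun k => (3 : ℝ) ^ k * (N.choose k : ℝ) with hw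
  have hwpos : ∀ k, k ≤ N → 0 < w k := by
    intro k hk
    have h1 : 0 < N.choose k := Nat.choose_pos hk
    have h2 : (0:ℝ) < (N.choose k : ℝ) := by exact_mod_cast h1
    positivity
  -- bounds for the greedy assignment
  have hbnd : ∀ k, 0 ≤ g k ∧ g k ≤ Q := by
    intro k
    rw [hg]; unfold chshGreedy
    by_cases h1 : l' ≤ k
    · simp [h1, le_of_lt hQ0]
    · simp only [h1, if_false]
      by_cases h2 : k + 1 = l'
      · simp only [h2, if_true]
        have hkN : k ≤ N := by omega
        have hwk : 0 < w k := hwpos k hkN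
        constructor
        · apply div_nonneg _ (le_of_lt hwk)
          linarith
        · rw [div_le_iff₀ hwk]
          have h3 := hl'2 k (by omega)
          push_neg at h3
          have h4 : chshTail N k = 3 ^ k * N.choose k + chshTail N l' := by
            rw [← h2]; exact chshTail_succ N k hkN
          have h5 : Q * (chshTail N k : ℝ) =
              Q * w k + Q * (chshTail N l' : ℝ) := by
            rw [h4]; push_cast; ring
          nlinarith
      · simp [h2, le_of_lt hQ0]
  -- normalization
  have hsplit : ∀ q : ℕ → ℝ, ∑ k ∈ Finset.range (N + 1), q k =
      ∑ k ∈ Finset.range l', q k + ∑ k ∈ Finset.Icc l' N, q k := by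
    intro q
    rw [show Finset.Icc l' N = Finset.Ico l' (N + 1) from (Finset.Ico_add_one_right_eq_Icc l' N).symm,
      Finset.range_eq_Ico, Finset.range_eq_Ico]
    exact (Finset.sum_Ico_consecutive q (Nat.zero_le l') hl'N).symm
  have htail : ∀ q : ℝ, ∑ k ∈ Finset.Icc l' N, q * w k = q * (chshTail N l' : ℝ) := by
    intro q
    rw [← Finset.mul_sum]
    congr 1
    unfold chshTail
    push_cast
    rfl
  have hgtail : ∑ k ∈ Finset.Icc l' N, g k * w k = Q * (chshTail N l' : ℝ) := by
    rw [← htail Q]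
    apply Finset.sum_congr rfl
    intro k hk
    simp only [Finset.mem_Icc] at hk
    rw [hg]; unfold chshGreedy
    simp [hk.1]
  have hnorm : ∑ k ∈ Finset.range (N + 1), g k * w k = 1 := by
    rw [hsplit (fun k => g k * w k), hgtail]
    rcases Nat.eq_zero_or_pos l' with h0 | hpos
    · subst h0
      simp only [Finset.range_zero, Finset.sum_empty, zero_add]
      have h4 : (chshTail N 0 : ℝ) = (4:ℝ) ^ N := by
        rw [chshTail_zero]; push_cast; ring
      have : (1:ℝ) ≤ Q * (chshTail N 0 : ℝ) := by
        rw [h4]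
        rw [← inv_mul_cancel₀ (a := (4:ℝ)^N) (by positivity)]
        apply mul_le_mul_of_nonneg_right hQ (by positivity)
      linarith
    · obtain ⟨m, rfl⟩ : ∃ m, l' = m + 1 := ⟨l' - 1, by omega⟩
      have hmN : m ≤ N := by omega
      have hsingle : ∑ k ∈ Finset.range (m + 1), g k * w k = g m * w m := by
        apply Finset.sum_eq_single_of_mem m (Finset.self_mem_range_succ m)
        intro k hk hkm
        simp only [Finset.mem_range] at hk
        have : g k = 0 := by
          rw [hg]; unfold chshGreedy
          have h1 : ¬ (m + 1 ≤ k) := by omega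
          have h2 : k + 1 ≠ m + 1 := by omega
          simp [h1, h2, hkm]
        rw [this, zero_mul]
      rw [hsingle]
      have hgm : g m = (1 - Q * (chshTail N (m+1) : ℝ)) / w m := by
        rw [hg]; unfold chshGreedy
        have h1 : ¬ (m + 1 ≤ m) := by omega
        simp [h1, hw]
      rw [hgm, div_mul_cancel₀ _ (ne_of_gt (hwpos m hmN))]
      ring
  have hnorm' : ∑ k ∈ Finset.range (N + 1), g k * 3 ^ k * (N.choose k : ℝ) = 1 := by
    rw [← hnorm]
    apply Finset.sum_congr rfl
    intro k _
    rw [hw]; ring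
  refine ⟨⟨hbnd, hnorm'⟩, ?_⟩
  intro p hp hpnorm
  have hpnorm' : ∑ k ∈ Finset.range (N + 1), p k * w k = 1 := by
    rw [← hpnorm]
    apply Finset.sum_congr rfl
    intro k _
    rw [hw]; ring
  set t : ℝ := (l' : ℝ) - 1 with ht
  have hkey : 0 ≤ ∑ k ∈ Finset.range (N + 1), ((k : ℝ) - t) * ((g k - p k) * w k) := by
    apply Finset.sum_nonneg
    intro k hk
    simp only [Finset.mem_range] at hk
    have hwk : 0 ≤ w k := le_of_lt (hwpos k (by omega))
    by_cases h1 : l' ≤ k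
    · have hgk : g k = Q := by rw [hg]; unfold chshGreedy; simp [h1]
      have hfac : 0 ≤ (k : ℝ) - t := by
        rw [ht]
        have : (l' : ℝ) ≤ (k : ℝ) := by exact_mod_cast h1
        linarith
      have : 0 ≤ g k - p k := by rw [hgk]; linarith [(hp k).2]
      positivity
    · by_cases h2 : k + 1 = l'
      · have : (k : ℝ) - t = 0 := by
          rw [ht]
          have : ((k : ℕ) : ℝ) + 1 = (l' : ℝ) := by exact_mod_cast congrArg (Nat.cast (R := ℝ)) h2
          linarith
        rw [this, zero_mul]
      · have hgk : g k = 0 := by rw [hg]; unfold chshGreedy; simp [h1, h2]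
        have hfac : (k : ℝ) - t ≤ 0 := by
          rw [ht]
          have hkl : k + 1 < l' := by omega
          have : ((k : ℕ) : ℝ) + 1 < (l' : ℝ) := by exact_mod_cast hkl
          linarith
        have hdk : g k - p k ≤ 0 := by rw [hgk]; linarith [(hp k).1]
        have := mul_nonneg (neg_nonneg.mpr hfac) (mul_nonneg (neg_nonneg.mpr hdk) hwk)
        nlinarith
  have hdiff : ∑ k ∈ Finset.range (N + 1), (k : ℝ) * p k * 3 ^ k * (N.choose k : ℝ) ≤
      ∑ k ∈ Finset.range (N + 1), (k : ℝ) * g k * 3 ^ k * (N.choose k : ℝ) := by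
    have hexp : ∑ k ∈ Finset.range (N + 1), ((k : ℝ) - t) * ((g k - p k) * w k) =
        (∑ k ∈ Finset.range (N + 1), (k : ℝ) * g k * 3 ^ k * (N.choose k : ℝ)
          - ∑ k ∈ Finset.range (N + 1), (k : ℝ) * p k * 3 ^ k * (N.choose k : ℝ))
        - t * (∑ k ∈ Finset.range (N + 1), g k * w k
          - ∑ k ∈ Finset.range (N + 1), p k * w k) := by
      rw [← Finset.sum_sub_distrib, ← Finset.sum_sub_distrib, Finset.mul_sum,
        ← Finset.sum_sub_distrib]
      apply Finset.sum_congr rfl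
      intro k _
      rw [hw]; ring
    rw [hexp, hnorm, hpnorm'] at hkey
    linarith
  unfold chshObj
  have h8N : (0:ℝ) ≤ 8 / (N : ℝ) := by positivity
  have := mul_le_mul_of_nonneg_left hdiff h8N
  linarith
end

section
/- For R ∈ [1/4, 3/10), the quantity S_Q(R) = 4(1−2R)^{3/2}/√(1−3R) is strictly greater than S_C(R) = 4(6R−1), and at R = 3/10 they are equal (both equal 16/5). -/
open Real

theorem quantum_beats_classical (R : ℝ) (h1 : 1/4 ≤ R) (h2 : R < 3/10) :
    4 * (1 - 2 * R) ^ ((3 : ℝ) / 2) / Real.sqrt (1 - 3 * R) > 4 * (6 * R - 1) ∧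
    4 * (1 - 2 * (3/10 : ℝ)) ^ ((3 : ℝ) / 2) / Real.sqrt (1 - 3 * (3/10)) = 16/5 ∧
    4 * (6 * (3/10 : ℝ) - 1) = 16/5 := by
  have ha : (0:ℝ) < 1 - 2 * R := by linarith
  have hs : (0:ℝ) < 1 - 3 * R := by linarith
  refine ⟨?_, ?_, by norm_num⟩
  · -- inequality
    have hsq : ((1 - 2*R) ^ ((3:ℝ)/2)) ^ 2 = (1 - 2*R) ^ 3 := by
      rw [← Real.rpow_natCast ((1 - 2*R) ^ ((3:ℝ)/2)) 2, ← Real.rpow_mul ha.le]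
      norm_num
    have hL : (4 * (1 - 2*R) ^ ((3:ℝ)/2) / Real.sqrt (1 - 3*R)) ^ 2
        = 16 * (1 - 2*R)^3 / (1 - 3*R) := by
      rw [div_pow, mul_pow, hsq, Real.sq_sqrt hs.le]
      ring
    have hLpos : 0 ≤ 4 * (1 - 2*R) ^ ((3:ℝ)/2) / Real.sqrt (1 - 3*R) := by
      positivity
    have key : (4 * (6 * R - 1)) ^ 2 < (4 * (1 - 2*R) ^ ((3:ℝ)/2) / Real.sqrt (1 - 3*R)) ^ 2 := by
      rw [hL, lt_div_iff₀ hs]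
      have hR : (0:ℝ) < R := by linarith
      have h3 : (0:ℝ) < (10*R - 3) ^ 2 := by
        have : 10*R - 3 < 0 := by linarith
        nlinarith
      nlinarith [mul_pos hR h3]
    exact lt_of_pow_lt_pow_left₀ 2 hLpos key
  · have h25 : (0:ℝ) ≤ 2/5 := by norm_num
    have : (1 - 2 * (3/10 : ℝ)) = 2/5 := by norm_num
    rw [this]
    have : (1 - 3 * (3/10 : ℝ)) = 1/10 := by norm_num
    rw [this]
    have h32 : ((2/5:ℝ)) ^ ((3:ℝ)/2) = Real.sqrt ((2/5)^3) := by
      rw [show (3:ℝ)/2 = (3:ℝ) * (1/2) by ring, Real.rpow_mul h25,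
        ← Real.sqrt_eq_rpow, ← Real.rpow_natCast (2/5:ℝ) 3]
      norm_num
    rw [h32, mul_div_assoc, ← Real.sqrt_div (by positivity),
      show ((2/5:ℝ)^3 / (1/10)) = (4/5)^2 by norm_num, Real.sqrt_sq (by norm_num)]
    norm_num
end

section
/- For S_C ∈ [2, 16/5), the relation S_Q = 2(8−S_C)^{3/2} / (3·√(6(4−S_C))) follows from eliminating R between S_C = 4(6R−1) and S_Q = 4(1−2R)^{3/2}/√(1−3R), and S_Q > S_C on this interval with S_Q = S_C = 16/5 at the right endpoint. -/
open Real

lemma rpow_three_halves (x : ℝ) (hx : 0 ≤ x) :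
    x ^ ((3 : ℝ) / 2) = Real.sqrt (x ^ 3) := by
  rw [Real.sqrt_eq_rpow, ← Real.rpow_natCast x 3, ← Real.rpow_mul hx]
  norm_num

theorem quantum_score_in_terms_of_classical (SC : ℝ) (h1 : 2 ≤ SC)
    (h2 : SC < 16/5) (R : ℝ) (hR : R = (SC + 4) / 24) :
    SC = 4 * (6 * R - 1) ∧
    4 * (1 - 2 * R) ^ ((3 : ℝ) / 2) / Real.sqrt (1 - 3 * R)
      = 2 * (8 - SC) ^ ((3 : ℝ) / 2) / (3 * Real.sqrt (6 * (4 - SC))) ∧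
    SC < 2 * (8 - SC) ^ ((3 : ℝ) / 2) / (3 * Real.sqrt (6 * (4 - SC))) ∧
    2 * (8 - (16/5 : ℝ)) ^ ((3 : ℝ) / 2) / (3 * Real.sqrt (6 * (4 - 16/5)))
      = 16/5 := by
  subst hR
  have hb : (0:ℝ) < 4 - SC := by linarith
  have ha : (0:ℝ) ≤ 8 - SC := by linarith
  have e1 : 1 - 2 * ((SC + 4) / 24) = (8 - SC) / 12 := by ring
  have e2 : 1 - 3 * ((SC + 4) / 24) = (4 - SC) / 8 := by ring
  have h8 : (0:ℝ) ≤ (8 - SC) / 12 := by linarith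
  have key2 : 4 * (1 - 2 * ((SC + 4) / 24)) ^ ((3 : ℝ) / 2)
      / Real.sqrt (1 - 3 * ((SC + 4) / 24))
      = 2 * (8 - SC) ^ ((3 : ℝ) / 2) / (3 * Real.sqrt (6 * (4 - SC))) := by
    rw [e1, e2, rpow_three_halves _ h8, rpow_three_halves _ ha]
    set A := 4 * Real.sqrt (((8 - SC) / 12) ^ 3) / Real.sqrt ((4 - SC) / 8) with hA
    set B := 2 * Real.sqrt ((8 - SC) ^ 3) / (3 * Real.sqrt (6 * (4 - SC))) with hB
    have hApos : 0 ≤ A := by positivity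
    have hBpos : 0 ≤ B := by positivity
    have hsq : A ^ 2 = B ^ 2 := by
      have s1 : Real.sqrt (((8 - SC) / 12) ^ 3) ^ 2 = ((8 - SC) / 12) ^ 3 :=
        Real.sq_sqrt (by positivity)
      have s2 : Real.sqrt ((4 - SC) / 8) ^ 2 = (4 - SC) / 8 :=
        Real.sq_sqrt (by positivity)
      have s3 : Real.sqrt ((8 - SC) ^ 3) ^ 2 = (8 - SC) ^ 3 :=
        Real.sq_sqrt (by positivity)
      have s4 : Real.sqrt (6 * (4 - SC)) ^ 2 = 6 * (4 - SC) :=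
        Real.sq_sqrt (by positivity)
      rw [hA, hB]
      have hb' : (4 - SC) ≠ 0 := ne_of_gt hb
      rw [div_pow (4 * √(((8 - SC) / 12) ^ 3)), div_pow (2 * √((8 - SC) ^ 3)), mul_pow, mul_pow,
        mul_pow, s1, s2, s3, s4]
      field_simp
      ring
    calc A = Real.sqrt (A ^ 2) := (Real.sqrt_sq hApos).symm
      _ = Real.sqrt (B ^ 2) := by rw [hsq]
      _ = B := Real.sqrt_sq hBpos
  refine ⟨by ring, key2, ?_, ?_⟩
  · rw [rpow_three_halves _ ha, lt_div_iff₀ (by positivity)]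
    have l1 : Real.sqrt (9 * SC ^ 2 * (6 * (4 - SC)))
        = SC * (3 * Real.sqrt (6 * (4 - SC))) := by
      rw [show 9 * SC ^ 2 * (6 * (4 - SC)) = (3 * SC) ^ 2 * (6 * (4 - SC)) by ring,
        Real.sqrt_mul (sq_nonneg _), Real.sqrt_sq (by linarith : (0:ℝ) ≤ 3 * SC)]
      ring
    have l2 : Real.sqrt (4 * (8 - SC) ^ 3) = 2 * Real.sqrt ((8 - SC) ^ 3) := by
      rw [show (4:ℝ) * (8 - SC) ^ 3 = 2 ^ 2 * (8 - SC) ^ 3 by ring,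
        Real.sqrt_mul (by positivity), Real.sqrt_sq (by norm_num)]
    rw [← l1, ← l2]
    apply Real.sqrt_lt_sqrt (by positivity)
    have hx : 5 * SC - 16 < 0 := by linarith
    have hx2 : 0 < (5 * SC - 16) ^ 2 := by nlinarith
    nlinarith [mul_pos hx2 (show (0:ℝ) < SC + 4 by linarith)]
  · have : (8 - (16/5 : ℝ)) = 24 / 5 := by norm_num
    rw [this, rpow_three_halves _ (by norm_num)]
    have h245 : ((24:ℝ)/5) ^ 3 = ((24:ℝ)/5) ^ 2 * (24/5) := by ring
    rw [h245, Real.sqrt_mul (by positivity), Real.sqrt_sq (by norm_num)]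
    have h6 : (6:ℝ) * (4 - 16/5) = 24/5 := by norm_num
    rw [h6]
    have hs : Real.sqrt ((24:ℝ)/5) ≠ 0 := by positivity
    field_simp
    ring
end

section
/- Let N ≥ 1 and define the probability vector p on k ∈ {0,…,N} by p_N = 3^{−N} and p_k = 0 for k < N (so that Σ_k binomial(N,k)·3^k·p_k = 1). Then M_1 := Σ_{k=0}^{N} binomial(N,k)·3^k·|p_k − 4^{−N}| = 2·(1 − (3/4)^N). -/
open Finset

theorem all_correct_strategy_L1_MD (N : ℕ) (hN : 1 ≤ N) (p : ℕ → ℝ)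
    (hp : ∀ k, p k = if k = N then ((3 : ℝ) ^ N)⁻¹ else 0) :
    (∑ k ∈ Finset.range (N + 1), (N.choose k : ℝ) * 3 ^ k * p k = 1) ∧
    ∑ k ∈ Finset.range (N + 1),
        (N.choose k : ℝ) * 3 ^ k * |p k - ((4 : ℝ) ^ N)⁻¹|
      = 2 * (1 - (3/4) ^ N) := by
  have hmem : N ∈ Finset.range (N + 1) := Finset.self_mem_range_succ N
  have h3 : (0:ℝ) < 3 ^ N := by positivity
  have h4 : (0:ℝ) < 4 ^ N := by positivity
  have hbin : ∑ k ∈ Finset.range (N + 1), (N.choose k : ℝ) * 3 ^ k = 4 ^ N := by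
    have := add_pow (3:ℝ) 1 N
    simp only [one_pow, mul_one] at this
    norm_num at this
    rw [this]
    apply Finset.sum_congr rfl
    intro k hk
    ring
  constructor
  · rw [Finset.sum_eq_single N]
    · rw [hp, if_pos rfl, Nat.choose_self]
      field_simp
      norm_num
    · intro b hb hbne
      rw [hp]; simp [hbne]
    · intro h; exact absurd hmem h
  · have key : ∀ k ∈ Finset.range (N + 1),
        (N.choose k : ℝ) * 3 ^ k * |p k - ((4 : ℝ) ^ N)⁻¹|
        = (N.choose k : ℝ) * 3 ^ k * ((4 : ℝ) ^ N)⁻¹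
          + (if k = N then (3:ℝ)^N * (((3 : ℝ) ^ N)⁻¹ - 2 * ((4 : ℝ) ^ N)⁻¹) else 0) := by
      intro k hk
      rw [hp]
      by_cases h : k = N
      · subst h
        have hle : ((4:ℝ)^k)⁻¹ ≤ ((3:ℝ)^k)⁻¹ :=
          inv_anti₀ h3 (pow_le_pow_left₀ (by norm_num) (by norm_num) k)
        rw [if_pos rfl, if_pos rfl, Nat.choose_self, Nat.cast_one, one_mul,
          abs_of_nonneg (by linarith)]
        ring
      · simp only [if_neg h, zero_sub, abs_neg, abs_of_nonneg (le_of_lt (inv_pos.2 h4)),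
          add_zero]
    rw [Finset.sum_congr rfl key, Finset.sum_add_distrib, Finset.sum_ite_eq' _ N, if_pos hmem,
      ← Finset.sum_mul, hbin]
    have h34 : ((3:ℝ)/4)^N = 3^N / 4^N := by rw [div_pow]
    field_simp
    have h5 : (4:ℝ)^N * (3^N/4^N) = 3^N := by field_simp
    linear_combination 2 * h5 + 2 * (4:ℝ)^N * h34
end

section
/- Suppose for each of N runs the conditional settings distribution given the hidden variable is the optimal one-shot attack with parameter P, applied independently across runs. Then the N-run measurement dependence P_{(N)} := max over settings strings y and hidden-variable strings x of p(y|x) equals P^N, and the N-run CHSH score (averaged over runs) equals 24P − 4, the same as the one-shot score. -/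
open Finset

theorem repeated_one_shot_attack (N : ℕ) (hN : 1 ≤ N) (P : ℝ)
    (hP : P ∈ Set.Icc (1/4 : ℝ) (1/3))
    (q : Fin 4 → Fin 4 → ℝ)
    (hq : ∀ x y, q x y = if (x : ℕ) + (y : ℕ) = 3 then 1 - 3 * P else P) :
    ((∀ x y : Fin N → Fin 4, ∏ n : Fin N, q (x n) (y n) ≤ P ^ N) ∧
      ∃ x y : Fin N → Fin 4, ∏ n : Fin N, q (x n) (y n) = P ^ N) ∧
    (8 / N) * ∑ x : Fin N → Fin 4, ((4 : ℝ) ^ N)⁻¹ *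
        ∑ y : Fin N → Fin 4, (∏ n : Fin N, q (x n) (y n)) *
          ((univ.filter (fun n : Fin N => (x n : ℕ) + (y n : ℕ) ≠ 3)).card : ℝ)
      - 4 = 24 * P - 4 := by
  obtain ⟨hP1, hP2⟩ := hP
  have hq0 : ∀ x y, 0 ≤ q x y := by
    intro x y; rw [hq]; split <;> linarith
  have hqle : ∀ x y, q x y ≤ P := by
    intro x y; rw [hq]; split <;> linarith
  have hsum1 : ∀ x : Fin 4, ∑ y : Fin 4, q x y = 1 := by
    intro x
    fin_cases x <;> simp [hq, Fin.sum_univ_four, show ((3:Fin 4):ℕ)=3 from rfl, show ((2:Fin 4):ℕ)=2 from rfl] <;> ring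
  have hsum2 : ∀ x : Fin 4,
      ∑ a : Fin 4, q x a * (if (x : ℕ) + (a : ℕ) = 3 then (0:ℝ) else 1) = 3 * P := by
    intro x
    fin_cases x <;> simp [hq, Fin.sum_univ_four, show ((3:Fin 4):ℕ)=3 from rfl, show ((2:Fin 4):ℕ)=2 from rfl] <;> ring
  constructor
  · constructor
    · intro x y
      calc ∏ n : Fin N, q (x n) (y n) ≤ ∏ _n : Fin N, P :=
            Finset.prod_le_prod (fun n _ => hq0 _ _) (fun n _ => hqle _ _)
        _ = P ^ N := by simp
    · refine ⟨fun _ => 0, fun _ => 0, ?_⟩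
      simp [hq]
  · have key : ∀ x : Fin N → Fin 4,
        ∑ y : Fin N → Fin 4, (∏ n : Fin N, q (x n) (y n)) *
          ((univ.filter (fun n : Fin N => (x n : ℕ) + (y n : ℕ) ≠ 3)).card : ℝ)
        = 3 * P * N := by
      intro x
      have hcard : ∀ y : Fin N → Fin 4,
          ((univ.filter (fun n : Fin N => (x n : ℕ) + (y n : ℕ) ≠ 3)).card : ℝ)
          = ∑ n : Fin N, (if (x n : ℕ) + (y n : ℕ) = 3 then (0:ℝ) else 1) := by
        intro y
        rw [Finset.card_filter]
        push_cast
        refine Finset.sum_congr rfl fun n _ => ?_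
        by_cases h : (x n : ℕ) + (y n : ℕ) = 3 <;> simp [h]
      calc ∑ y : Fin N → Fin 4, (∏ n : Fin N, q (x n) (y n)) *
              ((univ.filter (fun n : Fin N => (x n : ℕ) + (y n : ℕ) ≠ 3)).card : ℝ)
          = ∑ y : Fin N → Fin 4, ∑ n : Fin N, (∏ m : Fin N, q (x m) (y m)) *
              (if (x n : ℕ) + (y n : ℕ) = 3 then (0:ℝ) else 1) := by
            refine Finset.sum_congr rfl fun y _ => ?_
            rw [hcard, Finset.mul_sum]
        _ = ∑ n : Fin N, ∑ y : Fin N → Fin 4, (∏ m : Fin N, q (x m) (y m)) *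
              (if (x n : ℕ) + (y n : ℕ) = 3 then (0:ℝ) else 1) := Finset.sum_comm
        _ = ∑ n : Fin N, (3 * P) := by
            refine Finset.sum_congr rfl fun n _ => ?_
            have step1 : ∀ y : Fin N → Fin 4,
                (∏ m : Fin N, q (x m) (y m)) *
                  (if (x n : ℕ) + (y n : ℕ) = 3 then (0:ℝ) else 1)
                = ∏ m : Fin N, (q (x m) (y m) *
                    (if m = n then (if (x m : ℕ) + (y m : ℕ) = 3 then (0:ℝ) else 1) else 1)) := by
              intro y
              rw [Finset.prod_mul_distrib, Finset.prod_ite_eq' univ n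
                (fun m => (if (x m : ℕ) + (y m : ℕ) = 3 then (0:ℝ) else 1))]
              simp
            simp_rw [step1]
            rw [← Fintype.prod_sum (fun m a => q (x m) a *
              (if m = n then (if (x m : ℕ) + (a : ℕ) = 3 then (0:ℝ) else 1) else 1))]
            have : ∀ m : Fin N, (∑ a : Fin 4, q (x m) a *
                (if m = n then (if (x m : ℕ) + (a : ℕ) = 3 then (0:ℝ) else 1) else 1))
                = if m = n then 3 * P else 1 := by
              intro m
              by_cases h : m = n
              · simp only [h, if_pos rfl]
                simpa using hsum2 (x n)
              · simp only [if_neg h, mul_one]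
                exact hsum1 (x m)
            simp_rw [this]
            rw [Finset.prod_ite_eq' univ n (fun _ => (3:ℝ) * P)]
            simp
        _ = 3 * P * N := by simp [mul_comm]
    simp_rw [key]
    rw [Finset.sum_const, Finset.card_univ]
    have hcard : Fintype.card (Fin N → Fin 4) = 4 ^ N := by simp
    rw [hcard]
    have hN0 : (N : ℝ) ≠ 0 := by positivity
    have h4 : ((4:ℝ) ^ N) ≠ 0 := by positivity
    field_simp
    rw [nsmul_eq_mul]
    push_cast
    field_simp
    ring
end
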